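/- The class of functions possessing a uniform modulus of computation is downward closed under Turing reducibility: if f has a uniform modulus of computation and f' ≤_T f, then f' has a uniform modulus of computation. -/

import Mathlib

open Filter

namespace Paper

/-- Codes for oracle Turing machines (relativized partial recursive functions). -/
inductive OCode : Type
  | oracle : OCode
  | zero : OCode
  | succ : OCode
  | left : OCode
  | right : OCode
  | pair : OCode → OCode → OCode
  | comp : OCode → OCode → OCode
  | prec : OCode → OCode → OCode
  | rfind' : OCode → OCode

/-- Evaluation of an oracle code relative to an oracle `O`. -/
def evalo (O : ℕ →. ℕ) : OCode → ℕ →. ℕ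
  | .oracle => O
  | .zero => fun _ => Part.some 0
  | .succ => fun n => Part.some (n + 1)
  | .left => fun n => Part.some n.unpair.1
  | .right => fun n => Part.some n.unpair.2
  | .pair cf cg => fun n => Nat.pair <$> evalo O cf n <*> evalo O cg n
  | .comp cf cg => fun n => evalo O cg n >>= evalo O cf
  | .prec cf cg => Nat.unpaired fun a n =>
      n.rec (evalo O cf a) fun y IH => do
        let i ← IH
        evalo O cg (Nat.pair a (Nat.pair y i))
  | .rfind' cf => Nat.unpaired fun a m =>
      (Nat.rfind fun n => (fun x => x = 0) <$> evalo O cf (Nat.pair a (n + m))).map (· + m)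

/-- Turing reducibility for total functions. -/
def TRed (f g : ℕ → ℕ) : Prop := ∃ c : OCode, evalo (g : ℕ →. ℕ) c = (f : ℕ →. ℕ)

/-- `g` is a uniform modulus of computation for `f`. -/
def UniformModulus (g f : ℕ → ℕ) : Prop :=
  ∃ c : OCode, ∀ h : ℕ → ℕ, (∀ i, g i ≤ h i) → evalo (h : ℕ →. ℕ) c = (f : ℕ →. ℕ)

end Paper


namespace Paper

/-- Substitute code `c` for the oracle in `c'`. -/
def subst (c : OCode) : OCode → OCode
  | .oracle => c
  | .zero => .zero
  | .succ => .succ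
  | .left => .left
  | .right => .right
  | .pair cf cg => .pair (subst c cf) (subst c cg)
  | .comp cf cg => .comp (subst c cf) (subst c cg)
  | .prec cf cg => .prec (subst c cf) (subst c cg)
  | .rfind' cf => .rfind' (subst c cf)

theorem evalo_subst (O : ℕ →. ℕ) (c : OCode) :
    ∀ c', evalo O (subst c c') = evalo (evalo O c) c'
  | .oracle => rfl
  | .zero => rfl
  | .succ => rfl
  | .left => rfl
  | .right => rfl
  | .pair cf cg => by
      simp only [subst, evalo, evalo_subst O c cf, evalo_subst O c cg]
      rfl
  | .comp cf cg => by
      simp only [subst, evalo, evalo_subst O c cf, evalo_subst O c cg]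
      rfl
  | .prec cf cg => by
      simp only [subst, evalo, evalo_subst O c cf, evalo_subst O c cg]
      rfl
  | .rfind' cf => by
      simp only [subst, evalo, evalo_subst O c cf]
      rfl

end Paper

/-- functions with a uniform modulus of computation are closed
downwards under Turing reducibility. -/
theorem uniformModulus_downward_closed (f f' : ℕ → ℕ)
    (hf : ∃ g : ℕ → ℕ, Paper.UniformModulus g f)
    (hred : Paper.TRed f' f) :
    ∃ g' : ℕ → ℕ, Paper.UniformModulus g' f' := by
  obtain ⟨g, c, hc⟩ := hf
  obtain ⟨c', hc'⟩ := hred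
  exact ⟨g, Paper.subst c c', fun h hh => by
    rw [Paper.evalo_subst, hc h hh, hc']⟩
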